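/- arXiv:1807.07386 — 4 statements merged into one kernel-verified Lean document; each statement's English description precedes it below -/
import Mathlib

section
/- Let W : [t₀, T) → ℝ be differentiable with W(t₀) ≥ δ > 0, and suppose W'(t) ≥ C · W(t)² · (1+t)^(-1/2) for all t ∈ [t₀, T) with C > 0. Then T is finite; in fact T ≤ ((1 + t₀)^(1/2) + 1/(2Cδ))² - 1, so W cannot exist globally. -/
/-- If `f` has derivative `f'` on `[a,b]` and `f' ≥ 0` there, then `f a ≤ f b`. -/
lemma mono_aux (f f' : ℝ → ℝ) (a b : ℝ) (hab : a ≤ b)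
    (hd : ∀ s ∈ Set.Icc a b, HasDerivAt f (f' s) s)
    (hpos : ∀ s ∈ Set.Icc a b, 0 ≤ f' s) : f a ≤ f b := by
  have hmono : MonotoneOn f (Set.Icc a b) := by
    apply monotoneOn_of_deriv_nonneg (convex_Icc a b)
    · exact fun s hs => (hd s hs).continuousAt.continuousWithinAt
    · exact fun s hs =>
        (hd s (interior_subset hs)).differentiableAt.differentiableWithinAt
    · intro s hs
      rw [(hd s (interior_subset hs)).deriv]
      exact hpos s (interior_subset hs)
  exact hmono (Set.left_mem_Icc.2 hab) (Set.right_mem_Icc.2 hab) hab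

/-- Riccati blow-up with coefficient (1+t)^(-1/2): explicit bound on T. -/
theorem stmt_0 (W W' : ℝ → ℝ) (t₀ T δ C : ℝ)
    (ht₀ : 0 ≤ t₀) (hT : t₀ < T) (hδ : 0 < δ) (hC : 0 < C)
    (hW0 : W t₀ ≥ δ)
    (hderiv : ∀ t ∈ Set.Ico t₀ T, HasDerivAt W (W' t) t)
    (hineq : ∀ t ∈ Set.Ico t₀ T, W' t ≥ C * (W t) ^ 2 / Real.sqrt (1 + t)) :
    T ≤ (Real.sqrt (1 + t₀) + 1 / (2 * C * δ)) ^ 2 - 1 := by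
  set B : ℝ := (Real.sqrt (1 + t₀) + 1 / (2 * C * δ)) ^ 2 - 1 with hB
  clear_value B
  -- Step 0: basic positivity facts
  have h1s : ∀ t, t ∈ Set.Ico t₀ T → 0 < 1 + t := fun t ht => by
    have := ht.1; linarith
  -- Step 1: W is ≥ δ on the interval
  have hWpos : ∀ t, t ∈ Set.Ico t₀ T → δ ≤ W t := by
    intro t ht
    have hsub : Set.Icc t₀ t ⊆ Set.Ico t₀ T := fun s hs =>
      ⟨hs.1, lt_of_le_of_lt hs.2 ht.2⟩
    have := mono_aux W W' t₀ t ht.1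
      (fun s hs => hderiv s (hsub hs))
      (fun s hs => by
        have h1 := hineq s (hsub hs)
        have h2 : (0:ℝ) ≤ C * (W s) ^ 2 / Real.sqrt (1 + s) := by positivity
        linarith)
    linarith
  -- Step 2: key inequality on sqrt
  have key : ∀ t, t ∈ Set.Ico t₀ T →
      Real.sqrt (1 + t) < Real.sqrt (1 + t₀) + 1 / (2 * C * δ) := by
    intro t ht
    have hsub : Set.Icc t₀ t ⊆ Set.Ico t₀ T := fun s hs =>
      ⟨hs.1, lt_of_le_of_lt hs.2 ht.2⟩
    set f : ℝ → ℝ := fun s => -(W s)⁻¹ - 2 * C * Real.sqrt (1 + s) with hf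
    set g : ℝ → ℝ := fun s => W' s / (W s) ^ 2 - 2 * C * (1 / (2 * Real.sqrt (1 + s)))
      with hg
    have hfd : ∀ s ∈ Set.Icc t₀ t, HasDerivAt f (g s) s := by
      intro s hs
      have hsI := hsub hs
      have hWne : W s ≠ 0 := ne_of_gt (lt_of_lt_of_le hδ (hWpos s hsI))
      have h1 : HasDerivAt (fun s => -(W s)⁻¹) (W' s / (W s) ^ 2) s := by
        have := ((hderiv s hsI).inv hWne).neg
        exact this.congr_deriv (by ring)
      have h0 : HasDerivAt (fun s : ℝ => 1 + s) 1 s := by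
        simpa using (hasDerivAt_id s).const_add (1 : ℝ)
      have hsq : HasDerivAt (fun s : ℝ => Real.sqrt (1 + s))
          (1 / (2 * Real.sqrt (1 + s))) s := by
        have := (Real.hasDerivAt_sqrt (ne_of_gt (h1s s hsI))).comp s h0
        exact this.congr_deriv (by ring)
      exact h1.sub ((hsq.const_mul (2 * C)))
    have hgpos : ∀ s ∈ Set.Icc t₀ t, 0 ≤ g s := by
      intro s hs
      have hsI := hsub hs
      have h1 := hineq s hsI
      have hs0 := h1s s hsI
      have hsq0 : 0 < Real.sqrt (1 + s) := Real.sqrt_pos.2 hs0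
      have hW2 : 0 < (W s) ^ 2 := pow_pos (lt_of_lt_of_le hδ (hWpos s hsI)) 2
      have heq : C / Real.sqrt (1 + s)
          = (C * (W s) ^ 2 / Real.sqrt (1 + s)) / (W s) ^ 2 := by
        rw [eq_div_iff (ne_of_gt hW2)]; ring
      have hdiv : (C * (W s) ^ 2 / Real.sqrt (1 + s)) / (W s) ^ 2
          ≤ W' s / (W s) ^ 2 := by gcongr
      have h2 : 2 * C * (1 / (2 * Real.sqrt (1 + s))) = C / Real.sqrt (1 + s) := by
        field_simp
      simp only [hg, h2]
      rw [heq] at *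
      linarith
    have hmono := mono_aux f g t₀ t ht.1 hfd hgpos
    -- unfold f
    have hWt : δ ≤ W t := hWpos t ht
    have hWt0 : δ ≤ W t₀ := hW0
    have hinv0 : (W t₀)⁻¹ ≤ δ⁻¹ := by
      apply inv_anti₀ hδ hWt0
    have hinvt : 0 < (W t)⁻¹ := inv_pos.2 (lt_of_lt_of_le hδ hWt)
    have hmono' : -(W t₀)⁻¹ - 2 * C * Real.sqrt (1 + t₀)
        ≤ -(W t)⁻¹ - 2 * C * Real.sqrt (1 + t) := hmono
    have hlt : 2 * C * Real.sqrt (1 + t) < 2 * C * Real.sqrt (1 + t₀) + δ⁻¹ := by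
      linarith
    have h2C : (0:ℝ) < 2 * C := by linarith
    have hrw : 2 * C * (Real.sqrt (1 + t₀) + 1 / (2 * C * δ))
        = 2 * C * Real.sqrt (1 + t₀) + δ⁻¹ := by
      field_simp
    have := hlt.trans_eq hrw.symm
    exact lt_of_mul_lt_mul_left (by linarith [this]) (le_of_lt h2C)
  -- Step 3: conclude
  by_contra hcon
  push_neg at hcon
  have ht₀B : t₀ < B := by
    have h1 : Real.sqrt (1 + t₀) ^ 2 = 1 + t₀ := Real.sq_sqrt (by linarith)
    have h2 : 0 < 1 / (2 * C * δ) := by positivity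
    have h3 : 0 ≤ Real.sqrt (1 + t₀) := Real.sqrt_nonneg _
    nlinarith [mul_nonneg h3 (le_of_lt h2), mul_pos h2 h2]
  have hBmem : B ∈ Set.Ico t₀ T := ⟨le_of_lt ht₀B, hcon⟩
  have := key B hBmem
  have h1 : Real.sqrt (1 + B) ^ 2 = 1 + B := Real.sq_sqrt (by linarith)
  have h3 : 0 ≤ Real.sqrt (1 + B) := Real.sqrt_nonneg _
  have h4 : 0 ≤ Real.sqrt (1 + t₀) + 1 / (2 * C * δ) := by
    have := Real.sqrt_nonneg (1 + t₀)
    have : 0 < 1 / (2 * C * δ) := by positivity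
    positivity
  nlinarith [mul_self_lt_mul_self h3 this]
end

section
/- Let X, Y : [0, ∞) → ℝ be C¹ functions satisfying X'(t) = Y(t) and Y'(t) ≥ X(t) for all t ≥ 0, with X(0) ≥ 0 and Y(0) ≥ 0. Define Z by e^t Z(t) = ∫₀^t Y(τ) dτ. Then Z(t) ≥ 0 and Z'(t) ≥ 0 for all t ≥ 0. -/
open Set MeasureTheory intervalIntegral Real

/-- For X' = Y, Y' ≥ X with nonnegative data, Z(t) = e^{-t} ∫₀ᵗ Y satisfies
Z ≥ 0 and Z' ≥ 0 on [0,∞). -/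
theorem stmt_4 (X Y Y' Z : ℝ → ℝ)
    (hX : ∀ t ≥ (0:ℝ), HasDerivAt X (Y t) t)
    (hY : ∀ t ≥ (0:ℝ), HasDerivAt Y (Y' t) t)
    (hineq : ∀ t ≥ (0:ℝ), Y' t ≥ X t)
    (hX0 : X 0 ≥ 0) (hY0 : Y 0 ≥ 0)
    (hZ : ∀ t, Real.exp t * Z t = ∫ τ in (0:ℝ)..t, Y τ) :
    ∀ t ≥ (0:ℝ), 0 ≤ Z t ∧ 0 ≤ deriv Z t := by
  set W : ℝ → ℝ := fun t => ∫ τ in (0:ℝ)..t, Y τ with hWdef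
  have hW0 : W 0 = 0 := by simp [hWdef]
  have hZ0 : Z 0 = 0 := by
    have := hZ 0
    simpa [hW0] using this
  have hZW : ∀ t, Z t = Real.exp (-t) * W t := by
    intro t
    have h := hZ t
    have he : Real.exp t ≠ 0 := (Real.exp_pos t).ne'
    rw [Real.exp_neg]
    field_simp
    linarith [h]
  have hYc : ContinuousOn Y (Ici 0) := fun t ht =>
    ((hY t ht).continuousAt).continuousWithinAt
  have hint : ∀ t ≥ (0:ℝ), IntervalIntegrable Y volume 0 t := by
    intro t ht
    apply (hYc.mono _).intervalIntegrable
    rw [uIcc_of_le ht]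
    exact Icc_subset_Ici_self
  -- derivative of W at interior points
  have hWd : ∀ t > (0:ℝ), HasDerivAt W (Y t) t := by
    intro t ht
    exact integral_hasDerivAt_right (hint t ht.le)
      (ContinuousAt.stronglyMeasurableAtFilter isOpen_Ioi
        (fun x hx => (hY x hx.le).continuousAt) t ht)
      (hY t ht.le).continuousAt
  -- one-sided derivative of W at 0
  have hWd0 : HasDerivWithinAt W (Y 0) (Ici 0) 0 := by
    exact integral_hasDerivWithinAt_right (hint 0 le_rfl)
      ((hYc.mono Ioi_subset_Ici_self).stronglyMeasurableAtFilter_nhdsWithin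
        measurableSet_Ioi 0)
      ((hYc 0 self_mem_Ici).mono Ioi_subset_Ici_self)
  have hWwithin : ∀ t ∈ Ici (0:ℝ), HasDerivWithinAt W (Y t) (Ici 0) t := by
    intro t ht
    rcases eq_or_lt_of_le (mem_Ici.mp ht) with h | h
    · subst h; exact hWd0
    · exact (hWd t h).hasDerivWithinAt
  have hWcont : ContinuousOn W (Ici 0) := fun t ht =>
    (hWwithin t ht).continuousWithinAt
  -- X t = X 0 + W t on Ici 0
  have hXW : ∀ t ≥ (0:ℝ), X t = X 0 + W t := by
    intro t ht
    have hXc : ContinuousOn X (Icc 0 t) := fun s hs =>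
      ((hX s hs.1).continuousAt).continuousWithinAt
    have hc : ContinuousOn (fun s => X s - W s) (Icc 0 t) :=
      hXc.sub (hWcont.mono (Icc_subset_Ici_self))
    have hd : ∀ x ∈ Ico (0:ℝ) t, HasDerivWithinAt (fun s => X s - W s) 0 (Ici x) x := by
      intro x hx
      have h1 : HasDerivWithinAt X (Y x) (Ici x) x := (hX x hx.1).hasDerivWithinAt
      have h2 : HasDerivWithinAt W (Y x) (Ici x) x :=
        (hWwithin x hx.1).mono (Ici_subset_Ici.2 hx.1)
      have h3 := h1.sub h2
      rw [sub_self] at h3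
      exact h3
    have := constant_of_has_deriv_right_zero hc hd t ⟨ht, le_rfl⟩
    simp only [hW0, sub_zero] at this
    linarith
  -- key: Y t - W t ≥ 0 on Ici 0, via G t = exp t * (Y t - W t) monotone
  have hG : ∀ t ≥ (0:ℝ), 0 ≤ Y t - W t := by
    intro t ht
    set G : ℝ → ℝ := fun s => Real.exp s * (Y s - W s) with hGdef
    have hGmono : MonotoneOn G (Ici 0) := by
      apply monotoneOn_of_hasDerivWithinAt_nonneg (convex_Ici 0)
        (f' := fun s => Real.exp s * (Y' s - W s))
      · have hYcI : ContinuousOn Y (Ici 0) := hYc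
        exact (Real.continuous_exp.continuousOn).mul (hYcI.sub hWcont)
      · intro x hx
        rw [interior_Ici] at hx
        have h1 : HasDerivAt G (Real.exp x * (Y' x - W x)) x := by
          have := (Real.hasDerivAt_exp x).fun_mul ((hY x hx.le).fun_sub (hWd x hx))
          exact this.congr_deriv (by ring)
        exact h1.hasDerivWithinAt
      · intro x hx
        rw [interior_Ici] at hx
        have h1 : W x ≤ X x := by rw [hXW x hx.le]; linarith
        have h2 := hineq x hx.le
        have h3 : 0 ≤ Y' x - W x := by linarith
        positivity
    have hG0 : G 0 = Y 0 := by simp [hGdef, hW0]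
    have := hGmono (self_mem_Ici) ht ht
    rw [hG0] at this
    have hYt : Y 0 ≤ Real.exp t * (Y t - W t) := this
    nlinarith [Real.exp_pos t]
  -- derivative of Z at interior points
  have hZfun : Z = fun t => Real.exp (-t) * W t := funext hZW
  have hZd : ∀ t > (0:ℝ), HasDerivAt Z (Real.exp (-t) * (Y t - W t)) t := by
    intro t ht
    rw [hZfun]
    have hE : HasDerivAt (fun s : ℝ => Real.exp (-s)) (Real.exp (-t) * (-1)) t :=
      HasDerivAt.exp (hasDerivAt_neg t)
    have := hE.fun_mul (hWd t ht)
    exact this.congr_deriv (by ring)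
  -- Z monotone on Ici 0
  have hZcont : ContinuousOn Z (Ici 0) := by
    rw [hZfun]
    exact ((Real.continuous_exp.comp continuous_neg).continuousOn).mul hWcont
  have hZmono : MonotoneOn Z (Ici 0) := by
    apply monotoneOn_of_hasDerivWithinAt_nonneg (convex_Ici 0) hZcont
      (f' := fun s => Real.exp (-s) * (Y s - W s))
    · intro x hx
      rw [interior_Ici] at hx
      exact (hZd x hx).hasDerivWithinAt
    · intro x hx
      rw [interior_Ici] at hx
      exact mul_nonneg (Real.exp_pos _).le (hG x hx.le)
  intro t ht
  constructor
  · have := hZmono self_mem_Ici ht ht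
    rw [hZ0] at this
    exact this
  · rcases eq_or_lt_of_le (ht : (0:ℝ) ≤ t) with h | h
    · -- t = 0
      subst h
      by_cases hdiff : DifferentiableAt ℝ Z 0
      · have hZw0 : HasDerivWithinAt Z (Y 0) (Ici 0) 0 := by
          rw [hZfun]
          have hE : HasDerivWithinAt (fun s : ℝ => Real.exp (-s))
              (Real.exp (-(0:ℝ)) * (-1)) (Ici 0) 0 :=
            (HasDerivAt.exp (hasDerivAt_neg 0)).hasDerivWithinAt
          have := hE.fun_mul hWd0
          exact this.congr_deriv (by simp [hW0])
        have hu : UniqueDiffWithinAt ℝ (Ici (0:ℝ)) 0 :=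
          uniqueDiffOn_Ici 0 0 self_mem_Ici
        have h1 := (hdiff.hasDerivAt.hasDerivWithinAt (s := Ici 0)).derivWithin hu
        have h2 := hZw0.derivWithin hu
        rw [h1] at h2
        rw [h2]
        exact hY0
      · rw [deriv_zero_of_not_differentiableAt hdiff]
    · rw [(hZd t h).deriv]
      exact mul_nonneg (Real.exp_pos _).le (hG t ht)
end

section
/- For every t ≥ 0 and every constant C₁ ≥ 1, ∫_{|y| ≤ t + C₁} (e^y + e^{-y}) · sqrt((t+C₁)² − y²) dy ≤ C (t+1)^{1/2} e^t for a constant C depending only on C₁. -/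
private lemma sqrt_le_half (x : ℝ) (hx : 0 ≤ x) : Real.sqrt x ≤ (1 + x) / 2 := by
  nlinarith [Real.sq_sqrt hx, Real.sqrt_nonneg x, sq_nonneg (Real.sqrt x - 1)]

/-- Weighted-volume estimate (3.23): the slab integral is ≲ (t+1)^{1/2} e^t. -/
theorem stmt_6 (C₁ : ℝ) (hC₁ : 1 ≤ C₁) :
    ∃ C > 0, ∀ t ≥ (0:ℝ),
      (∫ y in (-(t + C₁))..(t + C₁),
          (Real.exp y + Real.exp (-y)) * Real.sqrt ((t + C₁) ^ 2 - y ^ 2))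
        ≤ C * Real.sqrt (t + 1) * Real.exp t := by
  refine ⟨2 * Real.sqrt (2 * C₁) * Real.exp C₁, ?_, ?_⟩
  · have h1 : 0 < Real.sqrt (2 * C₁) := Real.sqrt_pos.2 (by linarith)
    positivity
  intro t ht
  set a : ℝ := t + C₁ with ha
  have ha0 : 0 < a := by rw [ha]; linarith
  -- the majorant g and its antiderivative G
  set g : ℝ → ℝ := fun y =>
    Real.sqrt (2 * a) * ((Real.exp y * (1 + a - y) + Real.exp (-y) * (1 + a + y)) / 2) with hg
  set G : ℝ → ℝ := fun y =>
    Real.sqrt (2 * a) * ((Real.exp y * (2 + a - y) - Real.exp (-y) * (2 + a + y)) / 2) with hG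
  have hderiv : ∀ y : ℝ, HasDerivAt G (g y) y := by
    intro y
    have h1 : HasDerivAt Real.exp (Real.exp y) y := Real.hasDerivAt_exp y
    have h2 : HasDerivAt (fun y : ℝ => Real.exp (-y)) (Real.exp (-y) * (-1)) y :=
      (hasDerivAt_neg y).exp
    have h3 : HasDerivAt (fun y : ℝ => 2 + a - y) (-1) y := (hasDerivAt_id y).const_sub (2 + a)
    have h4 : HasDerivAt (fun y : ℝ => 2 + a + y) 1 y := (hasDerivAt_id y).const_add (2 + a)
    have h5 : HasDerivAt G _ y := (((h1.mul h3).sub (h2.mul h4)).div_const 2).const_mul (Real.sqrt (2 * a))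
    convert h5 using 1
    simp only [hg]
    ring
  have hgcont : Continuous g := by
    apply Continuous.mul continuous_const
    exact (((Real.continuous_exp.mul (by continuity)).add
      ((Real.continuous_exp.comp continuous_neg).mul (by continuity))).div_const 2)
  have hfcont : Continuous (fun y : ℝ =>
      (Real.exp y + Real.exp (-y)) * Real.sqrt (a ^ 2 - y ^ 2)) := by
    exact (Real.continuous_exp.add (Real.continuous_exp.comp continuous_neg)).mul
      (Real.continuous_sqrt.comp (by continuity))
  have hle : ∀ y ∈ Set.Icc (-a) a,
      (Real.exp y + Real.exp (-y)) * Real.sqrt (a ^ 2 - y ^ 2) ≤ g y := by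
    intro y hy
    obtain ⟨hy1, hy2⟩ := hy
    have h1 : (0:ℝ) ≤ a - y := by linarith
    have h2 : (0:ℝ) ≤ a + y := by linarith
    have hsplit : Real.sqrt (a ^ 2 - y ^ 2) = Real.sqrt (a - y) * Real.sqrt (a + y) := by
      rw [← Real.sqrt_mul h1]; ring_nf
    rw [hsplit, hg]
    set s1 := Real.sqrt (a - y)
    set s2 := Real.sqrt (a + y)
    set s3 := Real.sqrt (2 * a)
    have hs1 : s1 ≤ (1 + (a - y)) / 2 := sqrt_le_half _ h1
    have hs2 : s2 ≤ (1 + (a + y)) / 2 := sqrt_le_half _ h2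
    have hs13 : s1 ≤ s3 := Real.sqrt_le_sqrt (by linarith)
    have hs23 : s2 ≤ s3 := Real.sqrt_le_sqrt (by linarith)
    have hn1 : 0 ≤ s1 := Real.sqrt_nonneg _
    have hn2 : 0 ≤ s2 := Real.sqrt_nonneg _
    have hn3 : 0 ≤ s3 := Real.sqrt_nonneg _
    have he1 : 0 < Real.exp y := Real.exp_pos y
    have he2 : 0 < Real.exp (-y) := Real.exp_pos (-y)
    have t1 : Real.exp y * (s1 * s2) ≤ Real.exp y * ((1 + (a - y)) / 2 * s3) :=
      mul_le_mul_of_nonneg_left (mul_le_mul hs1 hs23 hn2 (by linarith)) he1.le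
    have t2 : Real.exp (-y) * (s1 * s2) ≤ Real.exp (-y) * (s3 * ((1 + (a + y)) / 2)) :=
      mul_le_mul_of_nonneg_left (mul_le_mul hs13 hs2 hn2 hn3) he2.le
    show (Real.exp y + Real.exp (-y)) * (s1 * s2)
      ≤ s3 * ((Real.exp y * (1 + a - y) + Real.exp (-y) * (1 + a + y)) / 2)
    nlinarith [t1, t2]
  have hab : -a ≤ a := by linarith
  have step1 : (∫ y in (-a)..a, (Real.exp y + Real.exp (-y)) * Real.sqrt (a ^ 2 - y ^ 2))
      ≤ ∫ y in (-a)..a, g y := by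
    apply intervalIntegral.integral_mono_on hab
      (hfcont.intervalIntegrable _ _) (hgcont.intervalIntegrable _ _) hle
  have step2 : (∫ y in (-a)..a, g y) = G a - G (-a) :=
    intervalIntegral.integral_eq_sub_of_hasDerivAt (fun y _ => hderiv y)
      (hgcont.intervalIntegrable _ _)
  have step3 : G a - G (-a) ≤ Real.sqrt (2 * a) * (2 * Real.exp a) := by
    have he : 0 < Real.exp (-a) := Real.exp_pos _
    have hn3 : 0 ≤ Real.sqrt (2 * a) := Real.sqrt_nonneg _
    have : G a - G (-a) = Real.sqrt (2 * a) * (2 * Real.exp a - Real.exp (-a) * (2 + 2 * a)) := by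
      simp [hG]; ring
    rw [this]
    apply mul_le_mul_of_nonneg_left _ hn3
    nlinarith
  have step4 : Real.sqrt (2 * a) * (2 * Real.exp a)
      ≤ 2 * Real.sqrt (2 * C₁) * Real.sqrt (t + 1) * Real.exp a := by
    have h1 : Real.sqrt (2 * a) ≤ Real.sqrt (2 * C₁) * Real.sqrt (t + 1) := by
      rw [← Real.sqrt_mul (by linarith)]
      apply Real.sqrt_le_sqrt
      rw [ha]; nlinarith
    nlinarith [Real.exp_pos a, Real.sqrt_nonneg (2 * a)]
  have hea : Real.exp a = Real.exp C₁ * Real.exp t := by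
    rw [← Real.exp_add, ha]; ring_nf
  calc (∫ y in (-(t + C₁))..(t + C₁),
          (Real.exp y + Real.exp (-y)) * Real.sqrt ((t + C₁) ^ 2 - y ^ 2))
      ≤ ∫ y in (-a)..a, g y := step1
    _ = G a - G (-a) := step2
    _ ≤ Real.sqrt (2 * a) * (2 * Real.exp a) := step3
    _ ≤ 2 * Real.sqrt (2 * C₁) * Real.sqrt (t + 1) * Real.exp a := step4
    _ = 2 * Real.sqrt (2 * C₁) * Real.exp C₁ * Real.sqrt (t + 1) * Real.exp t := by
        rw [hea]; ring
end

section
/- Suppose ρ_m > ρ_r > 0, u_r < 0, u_m = 0, and σ₊ satisfies the Rankine–Hugoniot conditions σ₊(ρ_r − ρ_m) = ρ_r u_r and σ₊ ρ_r u_r = ρ_r u_r² + ρ_r − ρ_m (isothermal pressure p = ρ). Then u_r + 1 < σ₊ < 1. -/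
/-- Lax entropy inequality for the right (3-)shock: u_r + 1 < σ₊ < 1. -/
theorem stmt_11 (ρm ρr ur σ : ℝ)
    (h1 : ρm > ρr) (h2 : 0 < ρr) (h3 : ur < 0)
    (hRH1 : σ * (ρr - ρm) = ρr * ur)
    (hRH2 : σ * (ρr * ur) = ρr * ur ^ 2 + ρr - ρm) :
    ur + 1 < σ ∧ σ < 1 := by
  have hd : ρr - ρm < 0 := by linarith
  have hσpos : 0 < σ := by nlinarith [mul_pos h2 (neg_pos.mpr h3)]
  have hq : σ ^ 2 = ur * σ + 1 := by
    have h : (σ ^ 2) * (ρr - ρm) = (ur * σ + 1) * (ρr - ρm) := by nlinarith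
    exact mul_right_cancel₀ (ne_of_lt hd) h
  constructor
  · nlinarith
  · nlinarith
end
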